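/- arXiv:2511.19153 — 2 statements merged into one kernel-verified Lean document; each statement's English description precedes it below -/
import Mathlib

section
/- Let G be a directed graph with unique source s and unique sink t, every vertex on some s-t path, and let p = u_1 ... u_k be a maximal univocal path (the extensions of all its vertices coincide). Then for every vertex v not on p, the extension ext(v) either contains all vertices of p (as a contiguous subsequence in the univocal order) or contains no vertex of p. -/
namespace FD

variable {V : Type*}

/-- A walk: nonempty vertex sequence with consecutive pairs edges. -/
def IsWalk (E : V → V → Prop) (l : List V) : Prop := l ≠ [] ∧ l.Chain' E

/-- A walk from `s` to `t`. -/
def IsWalkFromTo (E : V → V → Prop) (s t : V) (l : List V) : Prop :=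
  IsWalk E l ∧ l.head? = some s ∧ l.getLast? = some t

/-- A path from `s` to `t`: a walk with no repeated vertices. -/
def IsPathFromTo (E : V → V → Prop) (s t : V) (l : List V) : Prop :=
  IsWalkFromTo E s t l ∧ l.Nodup

/-- `s` is the unique source: a vertex has no incoming edge iff it is `s`. -/
def UniqueSource (E : V → V → Prop) (s : V) : Prop := ∀ v, (¬ ∃ u, E u v) ↔ v = s

/-- `t` is the unique sink: a vertex has no outgoing edge iff it is `t`. -/
def UniqueSink (E : V → V → Prop) (t : V) : Prop := ∀ v, (¬ ∃ w, E v w) ↔ v = t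

/-- `u` s-dominates `v`: every `s`-`v` path contains `u`. -/
def SDom (E : V → V → Prop) (s u v : V) : Prop := ∀ p, IsPathFromTo E s v p → u ∈ p

/-- `u` t-dominates `v`: every `v`-`t` path contains `u`. -/
def TDom (E : V → V → Prop) (t u v : V) : Prop := ∀ p, IsPathFromTo E v t p → u ∈ p

/-- `l` is the chain of s-dominators of `v`, listed in dominance order from `s` to `v`. -/
def IsSDomChain (E : V → V → Prop) (s v : V) (l : List V) : Prop :=
  l.Nodup ∧ (∀ u, u ∈ l ↔ SDom E s u v) ∧
    l.Chain' (fun a b => SDom E s a b) ∧ l.head? = some s ∧ l.getLast? = some v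

/-- `l` is the chain of t-dominators of `v`, listed in order from `v` to `t`. -/
def IsTDomChain (E : V → V → Prop) (t v : V) (l : List V) : Prop :=
  l.Nodup ∧ (∀ u, u ∈ l ↔ TDom E t u v) ∧
    l.Chain' (fun a b => TDom E t b a) ∧ l.head? = some v ∧ l.getLast? = some t

/-- `x = ext(v)`: the s-dominator chain of `v` (from `s` to `v`) concatenated with the
t-dominator chain of `v` (from `v` to `t`), with the duplicate `v` removed. -/
def IsExtension (E : V → V → Prop) (s t v : V) (x : List V) : Prop :=
  ∃ ds dt, IsSDomChain E s v ds ∧ IsTDomChain E t v dt ∧ x = ds ++ dt.tail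

/-- `P` is a `C`-walk cover: a set of `s`-`t` walks such that every vertex of `C`
lies on some walk of `P`. -/
def WalkCover (E : V → V → Prop) (s t : V) (C : Set V) (P : Set (List V)) : Prop :=
  (∀ w ∈ P, IsWalkFromTo E s t w) ∧ ∀ c ∈ C, ∃ w ∈ P, c ∈ w

/-- `X` is a `C`-safe sequence: every `C`-walk cover contains a walk having `X`
as a subsequence. -/
def SafeSeq (E : V → V → Prop) (s t : V) (C : Set V) (X : List V) : Prop :=
  ∀ P, WalkCover E s t C P → ∃ w ∈ P, X.Sublist w

/-- The list of edges traversed by a walk, in order (with multiplicity). -/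
def walkEdges (l : List V) : List (V × V) := l.zip l.tail

/-- `idoms` is the immediate s-dominator (parent in the s-dominator tree) function:
`idoms s = s`, and for `v ≠ s`, `idoms v` is a strict s-dominator of `v` that is
s-dominated by every strict s-dominator of `v`. -/
def IsIdomS (E : V → V → Prop) (s : V) (idoms : V → V) : Prop :=
  idoms s = s ∧ ∀ v, v ≠ s → idoms v ≠ v ∧ SDom E s (idoms v) v ∧
    ∀ u, u ≠ v → SDom E s u v → SDom E s u (idoms v)

/-- Immediate t-dominator (parent in the t-dominator tree) function. -/
def IsIdomT (E : V → V → Prop) (t : V) (idomt : V → V) : Prop :=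
  idomt t = t ∧ ∀ v, v ≠ t → idomt v ≠ v ∧ TDom E t (idomt v) v ∧
    ∀ u, u ≠ v → TDom E t u v → TDom E t u (idomt v)

/-- In the tree with parent function `par` rooted at `root`, `c` is the unique child
of `p`. -/
def UniqueChild (par : V → V) (root c p : V) : Prop :=
  c ≠ root ∧ par c = p ∧ ∀ y, y ≠ root → par y = p → y = c

/-- A univocal path `v₁ … v_k`: in the t-dominator tree each `v_{i+1}` has `v_i`
as its unique child, and `v_k … v_1` is a path in the s-dominator tree where each
vertex but the deepest (`v_k`) has exactly one child. -/
def IsUnivocal (idoms idomt : V → V) (s t : V) (l : List V) : Prop :=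
  l ≠ [] ∧ l.Chain' (fun a b => UniqueChild idomt t a b ∧ UniqueChild idoms s b a)

/-- A maximal univocal path: not properly contained in another univocal path. -/
def IsMaximalUnivocal (idoms idomt : V → V) (s t : V) (l : List V) : Prop :=
  IsUnivocal idoms idomt s t l ∧
    ∀ l', IsUnivocal idoms idomt s t l' → l <:+: l' → l' = l

/-- `X` is a maximal safe sequence for walk covers (covering all vertices):
it is safe and no proper supersequence of it is safe. -/
def MaximalSafe (E : V → V → Prop) (s t : V) (X : List V) : Prop :=
  SafeSeq E s t Set.univ X ∧ ∀ Y, X.Sublist Y → Y ≠ X → ¬ SafeSeq E s t Set.univ Y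

/-- Edge `e` reaches edge `e'`: there is a (possibly empty) path from the head of `e`
to the tail of `e'`. -/
def EReach (E : V → V → Prop) (e e' : V × V) : Prop := Relation.ReflTransGen E e.2 e'.1

/-- `P` is a cover of the edge set `C` by `s`-`t` walks. -/
def EdgeWalkCover (E : V → V → Prop) (s t : V) (C : Set (V × V)) (P : Set (List V)) : Prop :=
  (∀ w ∈ P, IsWalkFromTo E s t w) ∧ ∀ c ∈ C, ∃ w ∈ P, c ∈ walkEdges w

/-- A `C`-safe sequence of edges: every cover of `C` by `s`-`t` walks contains a walk
traversing the edges of `S` in order. -/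
def SafeEdgeSeq (E : V → V → Prop) (s t : V) (C : Set (V × V)) (S : List (V × V)) : Prop :=
  ∀ P, EdgeWalkCover E s t C P → ∃ w ∈ P, S.Sublist (walkEdges w)

section Proof17

variable {E : V → V → Prop} {s t : V}

lemma mem_of_getLast?' {l : List V} {a : V} (h : l.getLast? = some a) : a ∈ l := by
  cases l with
  | nil => simp at h
  | cons b l' =>
    rw [List.getLast?_eq_getLast (by simp)] at h
    have := List.getLast_mem (l := b :: l') (by simp)
    simp only [Option.some_inj] at h
    rwa [h] at this

lemma mem_of_head?' {l : List V} {a : V} (h : l.head? = some a) : a ∈ l := by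
  cases l with
  | nil => simp at h
  | cons b l' => simp at h; simp [h]

lemma path_prefix {P1 P2 : List V} {b u : V}
    (h : IsPathFromTo E s u (P1 ++ b :: P2)) : IsPathFromTo E s b (P1 ++ [b]) := by
  obtain ⟨⟨⟨hne, hch⟩, hhd, hlast⟩, hnd⟩ := h
  refine ⟨⟨⟨by simp, hch.prefix ⟨P2, by simp⟩⟩, ?_, by simp [List.getLast?_concat]⟩,
    hnd.sublist (List.IsPrefix.sublist ⟨P2, by simp⟩)⟩
  cases P1 with
  | nil => simpa using hhd
  | cons a l => simpa using hhd

lemma path_suffix {P1 P2 : List V} {b u : V}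
    (h : IsPathFromTo E u t (P1 ++ b :: P2)) : IsPathFromTo E b t (b :: P2) := by
  obtain ⟨⟨⟨hne, hch⟩, hhd, hlast⟩, hnd⟩ := h
  refine ⟨⟨⟨by simp, hch.suffix ⟨P1, rfl⟩⟩, by simp, ?_⟩,
    hnd.sublist (List.IsSuffix.sublist ⟨P1, rfl⟩)⟩
  rwa [List.getLast?_append_of_ne_nil (l₁ := P1) (by simp)] at hlast

lemma exists_path_to (hall : ∀ a : V, ∃ q, IsPathFromTo E s t q ∧ a ∈ q) (u : V) :
    ∃ P, IsPathFromTo E s u P := by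
  obtain ⟨q, hq, hu⟩ := hall u
  obtain ⟨P1, P2, rfl⟩ := List.append_of_mem hu
  exact ⟨P1 ++ [u], path_prefix hq⟩

lemma exists_path_from (hall : ∀ a : V, ∃ q, IsPathFromTo E s t q ∧ a ∈ q) (u : V) :
    ∃ P, IsPathFromTo E u t P := by
  obtain ⟨q, hq, hu⟩ := hall u
  obtain ⟨P1, P2, rfl⟩ := List.append_of_mem hu
  exact ⟨u :: P2, path_suffix hq⟩

lemma sdom_refl (v : V) : SDom E s v v := fun q hq => mem_of_getLast?' hq.1.2.2

lemma tdom_refl (v : V) : TDom E t v v := fun q hq => mem_of_head?' hq.1.2.1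

lemma sdom_trans {a b c : V} (h1 : SDom E s a b) (h2 : SDom E s b c) : SDom E s a c := by
  intro P hP
  obtain ⟨P1, P2, rfl⟩ := List.append_of_mem (h2 P hP)
  have ha := h1 _ (path_prefix hP)
  simp only [List.mem_append, List.mem_singleton, List.mem_cons] at ha ⊢
  tauto

lemma tdom_trans {a b c : V} (h1 : TDom E t a b) (h2 : TDom E t b c) : TDom E t a c := by
  intro P hP
  obtain ⟨P1, P2, rfl⟩ := List.append_of_mem (h2 P hP)
  have ha := h1 _ (path_suffix hP)
  simp only [List.mem_append, List.mem_cons] at ha ⊢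
  tauto

lemma sdom_antisymm (hall : ∀ a : V, ∃ q, IsPathFromTo E s t q ∧ a ∈ q)
    {u w : V} (h1 : SDom E s u w) (h2 : SDom E s w u) : u = w := by
  by_contra hne
  obtain ⟨P, hP⟩ := exists_path_to hall u
  obtain ⟨P1, P2, rfl⟩ := List.append_of_mem (h2 P hP)
  have hu := h1 _ (path_prefix hP)
  have hlast : u ∈ w :: P2 := mem_of_getLast?' (by
    rw [← List.getLast?_append_of_ne_nil (l₁ := P1) (by simp)]; exact hP.1.2.2)
  have hnd := hP.2
  rw [List.nodup_append] at hnd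
  rcases List.mem_append.mp hu with h | h
  · exact hnd.2.2 _ h _ hlast rfl
  · simp at h; exact hne h

lemma tdom_antisymm (hall : ∀ a : V, ∃ q, IsPathFromTo E s t q ∧ a ∈ q)
    {u w : V} (h1 : TDom E t u w) (h2 : TDom E t w u) : u = w := by
  by_contra hne
  obtain ⟨P, hP⟩ := exists_path_from hall u
  obtain ⟨P1, P2, rfl⟩ := List.append_of_mem (h2 P hP)
  have hu := h1 _ (path_suffix hP)
  have hnd := hP.2
  rw [List.nodup_append] at hnd
  rcases List.mem_cons.mp hu with h | h
  · exact hne h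
  · cases P1 with
    | nil =>
      have hh := hP.1.2.1; simp at hh
      exact hne hh.symm
    | cons a P1' =>
      have hhd := hP.1.2.1; simp at hhd
      subst hhd
      exact hnd.2.2 _ List.mem_cons_self _ hu rfl

lemma sdom_s {u : V} (h : SDom E s u s) : u = s := by
  have hp : IsPathFromTo E s s [s] := ⟨⟨⟨by simp, List.isChain_singleton _⟩, by simp, by simp⟩, by simp⟩
  simpa using h [s] hp

lemma tdom_t {u : V} (h : TDom E t u t) : u = t := by
  have hp : IsPathFromTo E t t [t] := ⟨⟨⟨by simp, List.isChain_singleton _⟩, by simp, by simp⟩, by simp⟩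
  simpa using h [t] hp

lemma schain_peel {idoms : V → V} (hids : IsIdomS E s idoms)
    (hall : ∀ a : V, ∃ q, IsPathFromTo E s t q ∧ a ∈ q)
    {v : V} {l : List V} (hl : IsSDomChain E s v l) (hv : v ≠ s) :
    ∃ l', l = l' ++ [v] ∧ IsSDomChain E s (idoms v) l' := by
  obtain ⟨hnd, hmem, hch, hhd, hlast⟩ := hl
  obtain ⟨hwne, hwdom, hmax⟩ := hids.2 v hv
  have hlne : l ≠ [] := by rintro rfl; simp at hlast
  have hgl : l.getLast hlne = v := by
    rwa [List.getLast?_eq_getLast hlne, Option.some_inj] at hlast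
  obtain ⟨l', hl'eq⟩ : ∃ l', l = l' ++ [v] :=
    ⟨l.dropLast, by rw [← hgl]; exact (List.dropLast_append_getLast hlne).symm⟩
  subst hl'eq
  have hl'ne : l' ≠ [] := by rintro rfl; simp at hhd; exact hv hhd
  have hvnl' : v ∉ l' := by
    intro h
    rw [List.nodup_append] at hnd
    exact hnd.2.2 _ h _ (by simp) rfl
  have hmem' : ∀ u, u ∈ l' ↔ SDom E s u (idoms v) := by
    intro u
    constructor
    · intro hu
      have h1 : SDom E s u v := (hmem u).mp (by simp [hu])
      have h2 : u ≠ v := fun h => hvnl' (h ▸ hu)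
      exact hmax u h2 h1
    · intro hu
      have h1 : SDom E s u v := sdom_trans hu hwdom
      have h2 : u ≠ v := by
        rintro rfl
        exact hwne (sdom_antisymm hall hwdom hu)
      have := (hmem u).mpr h1
      simp only [List.mem_append, List.mem_singleton] at this
      tauto
  haveI : IsTrans V (fun a b => SDom E s a b) := ⟨fun _ _ _ => sdom_trans⟩
  replace hch : List.Pairwise (fun a b => SDom E s a b) (l' ++ [v]) := List.isChain_iff_pairwise.mp hch
  refine ⟨l', rfl, ?_, hmem', ?_, ?_, ?_⟩
  · exact hnd.sublist (by simp)
  · exact List.isChain_iff_pairwise.mpr (hch.sublist (by simp))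
  · cases l' with
    | nil => exact absurd rfl hl'ne
    | cons a l'' => simpa using hhd
  · -- getLast? l' = some (idoms v)
    have hl'' : l' = l'.dropLast ++ [l'.getLast hl'ne] := (List.dropLast_append_getLast hl'ne).symm
    set g := l'.getLast hl'ne with hg
    have hgmem : g ∈ l' := List.getLast_mem hl'ne
    have hgdom : SDom E s g (idoms v) := (hmem' g).mp hgmem
    have hwmem : idoms v ∈ l' := (hmem' _).mpr (sdom_refl _)
    have hpw : l'.Pairwise (fun a b => SDom E s a b) := hch.sublist (by simp)
    have : idoms v = g := by
      rw [hl''] at hwmem hpw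
      rw [List.pairwise_append] at hpw
      rcases List.mem_append.mp hwmem with h | h
      · exact sdom_antisymm hall (hpw.2.2 _ h _ (by simp)) hgdom
      · simpa using h
    rw [List.getLast?_eq_getLast hl'ne, ← hg, this]

lemma tchain_peel {idomt : V → V} (hidt : IsIdomT E t idomt)
    (hall : ∀ a : V, ∃ q, IsPathFromTo E s t q ∧ a ∈ q)
    {v : V} {l : List V} (hl : IsTDomChain E t v l) (hv : v ≠ t) :
    ∃ l', l = v :: l' ∧ IsTDomChain E t (idomt v) l' := by
  obtain ⟨hnd, hmem, hch, hhd, hlast⟩ := hl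
  obtain ⟨hwne, hwdom, hmax⟩ := hidt.2 v hv
  obtain ⟨l', hl'eq⟩ : ∃ l', l = v :: l' := by
    cases l with
    | nil => simp at hhd
    | cons a l'' => simp at hhd; exact ⟨l'', by rw [hhd]⟩
  subst hl'eq
  have hl'ne : l' ≠ [] := by rintro rfl; simp at hlast; exact hv hlast
  have hvnl' : v ∉ l' := by
    have := hnd; simp [List.nodup_cons] at this; exact this.1
  have hmem' : ∀ u, u ∈ l' ↔ TDom E t u (idomt v) := by
    intro u
    constructor
    · intro hu
      have h1 : TDom E t u v := (hmem u).mp (by simp [hu])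
      have h2 : u ≠ v := fun h => hvnl' (h ▸ hu)
      exact hmax u h2 h1
    · intro hu
      have h1 : TDom E t u v := tdom_trans hu hwdom
      have h2 : u ≠ v := by
        rintro rfl
        exact hwne (tdom_antisymm hall hwdom hu)
      have := (hmem u).mpr h1
      simp only [List.mem_cons] at this
      tauto
  haveI : IsTrans V (fun a b => TDom E t b a) :=
    ⟨fun _ _ _ hab hbc => tdom_trans hbc hab⟩
  replace hch : List.Pairwise (fun a b => TDom E t b a) (v :: l') := List.isChain_iff_pairwise.mp hch
  refine ⟨l', rfl, ?_, hmem', ?_, ?_, ?_⟩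
  · exact hnd.sublist (by simp)
  · exact List.isChain_iff_pairwise.mpr (hch.sublist (by simp))
  · -- head? l' = some (idomt v)
    cases hll' : l' with
    | nil => exact absurd hll' hl'ne
    | cons g l'' =>
      have hgmem : g ∈ l' := by rw [hll']; simp
      have hgdom : TDom E t g (idomt v) := (hmem' g).mp hgmem
      have hwmem : idomt v ∈ l' := (hmem' _).mpr (tdom_refl _)
      have hpw : l'.Pairwise (fun a b => TDom E t b a) := hch.sublist (by simp)
      rw [hll'] at hwmem hpw
      rw [List.pairwise_cons] at hpw
      rcases List.mem_cons.mp hwmem with h | h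
      · simp [h]
      · have := hpw.1 _ h
        simp [tdom_antisymm hall hgdom this]
  · cases l' with
    | nil => exact absurd rfl hl'ne
    | cons a l'' =>
      rw [show (v :: a :: l'') = [v] ++ (a :: l'') by simp,
        List.getLast?_append_of_ne_nil (l₁ := [v]) (by simp)] at hlast
      exact hlast

lemma schain_s {l : List V} (hl : IsSDomChain E s s l) : l = [s] := by
  obtain ⟨hnd, hmem, hch, hhd, hlast⟩ := hl
  cases l with
  | nil => simp at hhd
  | cons a l' =>
    simp at hhd
    cases l' with
    | nil => rw [hhd]
    | cons b l'' =>
      exfalso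
      have hb : b = s := sdom_s ((hmem b).mp (by simp))
      rw [hhd, hb] at hnd
      simp at hnd

lemma tchain_t {l : List V} (hl : IsTDomChain E t t l) : l = [t] := by
  obtain ⟨hnd, hmem, hch, hhd, hlast⟩ := hl
  cases l with
  | nil => simp at hhd
  | cons a l' =>
    simp at hhd
    cases l' with
    | nil => rw [hhd]
    | cons b l'' =>
      exfalso
      have hb : b = t := tdom_t ((hmem b).mp (by simp))
      rw [hhd, hb] at hnd
      simp at hnd
lemma lemD {idoms idomt : V → V} (hids : IsIdomS E s idoms)
    (hall : ∀ a : V, ∃ q, IsPathFromTo E s t q ∧ a ∈ q) {p : List V}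
    (hpch : p.Chain' (fun a b => UniqueChild idomt t a b ∧ UniqueChild idoms s b a)) :
    ∀ q w l, (q ++ [w]) <+: p → IsSDomChain E s w l → (q ++ [w]) <:+ l := by
  intro q
  induction q using List.reverseRecOn with
  | nil =>
    intro w l hpre hl
    have hlast := hl.2.2.2.2
    have hlne : l ≠ [] := by rintro rfl; simp at hlast
    have hgl : l.getLast hlne = w := by
      rwa [List.getLast?_eq_getLast hlne, Option.some_inj] at hlast
    exact ⟨l.dropLast, by rw [← hgl]; simpa using List.dropLast_append_getLast hlne⟩
  | append_singleton q' w' ih =>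
    intro w l hpre hl
    have hinf : [w', w] <:+: p := by
      obtain ⟨r, hr⟩ := hpre
      exact ⟨q', r, by rw [← hr]; simp⟩
    have hR := hpch.infix hinf
    replace hR := List.isChain_pair.mp hR
    obtain ⟨hwns, hiw, _⟩ := hR.2
    obtain ⟨l', rfl, hl'⟩ := schain_peel hids hall hl hwns
    rw [hiw] at hl'
    have hpre' : (q' ++ [w']) <+: p := by
      obtain ⟨r, hr⟩ := hpre
      exact ⟨w :: r, by rw [← hr]; simp⟩
    obtain ⟨u, hu⟩ := ih w' l' hpre' hl'
    exact ⟨u, by rw [← List.append_assoc, hu]⟩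

lemma lemD' {idoms idomt : V → V} (hidt : IsIdomT E t idomt)
    (hall : ∀ a : V, ∃ q, IsPathFromTo E s t q ∧ a ∈ q) {p : List V}
    (hpch : p.Chain' (fun a b => UniqueChild idomt t a b ∧ UniqueChild idoms s b a)) :
    ∀ q w l, (w :: q) <:+ p → IsTDomChain E t w l → (w :: q) <+: l := by
  intro q
  induction q with
  | nil =>
    intro w l hsuf hl
    have hhd := hl.2.2.2.1
    cases l with
    | nil => simp at hhd
    | cons a l'' => simp at hhd; exact ⟨l'', by simp [hhd]⟩
  | cons w' q' ih =>
    intro w l hsuf hl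
    have hinf : [w, w'] <:+: p := by
      obtain ⟨u, hu⟩ := hsuf
      exact ⟨u, q', by rw [← hu]; simp⟩
    have hR := hpch.infix hinf
    replace hR := List.isChain_pair.mp hR
    obtain ⟨hwnt, hiw, _⟩ := hR.1
    obtain ⟨l', rfl, hl'⟩ := tchain_peel hidt hall hl hwnt
    rw [hiw] at hl'
    have hsuf' : (w' :: q') <:+ p := by
      obtain ⟨u, hu⟩ := hsuf
      exact ⟨u ++ [w], by rw [← hu]; simp⟩
    obtain ⟨r, hr⟩ := ih w' l' hsuf' hl'
    exact ⟨r, by rw [← hr]; simp⟩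

lemma lemC {idoms idomt : V → V} (hids : IsIdomS E s idoms)
    (hall : ∀ a : V, ∃ q, IsPathFromTo E s t q ∧ a ∈ q) {p : List V}
    (hpch : p.Chain' (fun a b => UniqueChild idomt t a b ∧ UniqueChild idoms s b a)) :
    ∀ n l v, l.length ≤ n → IsSDomChain E s v l → v ∉ p →
      (∃ a ∈ p, a ∈ l) → p <:+: l := by
  intro n
  induction n with
  | zero =>
    intro l v hlen hl
    rw [Nat.le_zero, List.length_eq_zero_iff] at hlen
    subst hlen
    have := hl.2.2.2.2
    simp at this
  | succ n ih =>
    rintro l v hlen hl hvp ⟨a, hap, hal⟩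
    have hane : a ≠ v := fun h => hvp (h ▸ hap)
    have hvs : v ≠ s := by
      rintro rfl
      rw [schain_s hl] at hal
      simp at hal
      exact hane hal
    obtain ⟨l', rfl, hl'⟩ := schain_peel hids hall hl hvs
    have hal' : a ∈ l' := by
      rcases List.mem_append.mp hal with h | h
      · exact h
      · simp at h; exact absurd h hane
    by_cases hip : idoms v ∈ p
    · obtain ⟨q, r, hqr⟩ := List.append_of_mem hip
      cases r with
      | nil =>
        have hD := lemD hids hall hpch q (idoms v) l' (by rw [hqr]) hl'
        exact (hqr ▸ hD.isInfix).trans ⟨[], [v], by simp⟩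
      | cons y r' =>
        exfalso
        have hinf : [idoms v, y] <:+: p := ⟨q, r', by rw [hqr]; simp⟩
        have hR := hpch.infix hinf
        replace hR := List.isChain_pair.mp hR
        have hvy : v = y := hR.2.2.2 v hvs rfl
        exact hvp (hvy ▸ (hqr ▸ (by simp : y ∈ q ++ idoms v :: y :: r')))
    · have hlen' : l'.length ≤ n := by
        simp only [List.length_append, List.length_singleton] at hlen
        omega
      exact (ih l' (idoms v) hlen' hl' hip ⟨a, hap, hal'⟩).trans ⟨[], [v], by simp⟩

lemma lemC' {idoms idomt : V → V} (hidt : IsIdomT E t idomt)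
    (hall : ∀ a : V, ∃ q, IsPathFromTo E s t q ∧ a ∈ q) {p : List V}
    (hpch : p.Chain' (fun a b => UniqueChild idomt t a b ∧ UniqueChild idoms s b a)) :
    ∀ n l v, l.length ≤ n → IsTDomChain E t v l → v ∉ p →
      (∃ a ∈ p, a ∈ l) → p <:+: l := by
  intro n
  induction n with
  | zero =>
    intro l v hlen hl
    rw [Nat.le_zero, List.length_eq_zero_iff] at hlen
    subst hlen
    have := hl.2.2.2.2
    simp at this
  | succ n ih =>
    rintro l v hlen hl hvp ⟨a, hap, hal⟩
    have hane : a ≠ v := fun h => hvp (h ▸ hap)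
    have hvt : v ≠ t := by
      rintro rfl
      rw [tchain_t hl] at hal
      simp at hal
      exact hane hal
    obtain ⟨l', rfl, hl'⟩ := tchain_peel hidt hall hl hvt
    have hal' : a ∈ l' := by
      rcases List.mem_cons.mp hal with h | h
      · exact absurd h hane
      · exact h
    by_cases hip : idomt v ∈ p
    · obtain ⟨q, r, hqr⟩ := List.append_of_mem hip
      rcases q.eq_nil_or_concat with rfl | ⟨q₀, z, rfl⟩
      · have hD := lemD' hidt hall hpch r (idomt v) l' (by rw [hqr]; simp) hl'
        have : p <:+: l' := by rw [hqr]; simpa using hD.isInfix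
        exact this.trans ⟨[v], [], by simp⟩
      · exfalso
        have hinf : [z, idomt v] <:+: p := ⟨q₀, r, by rw [hqr]; simp⟩
        have hR := hpch.infix hinf
        replace hR := List.isChain_pair.mp hR
        have hvz : v = z := hR.1.2.2 v hvt rfl
        exact hvp (hvz ▸ (hqr ▸ (by simp : z ∈ q₀.concat z ++ idomt v :: r)))
    · have hlen' : l'.length ≤ n := by
        simp only [List.length_cons] at hlen
        omega
      exact (ih l' (idomt v) hlen' hl' hip ⟨a, hap, hal'⟩).trans ⟨[v], [], by simp⟩

end Proof17

/-- for a maximal univocal path `p` and a vertex `v` not on `p`, the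
extension `ext v` either contains all of `p` (contiguously, in univocal order) or
contains no vertex of `p`. -/
theorem stmt17 {V : Type*} [Fintype V] (E : V → V → Prop) (s t : V)
    (hs : UniqueSource E s) (ht : UniqueSink E t)
    (hall : ∀ a : V, ∃ p, IsPathFromTo E s t p ∧ a ∈ p)
    (idoms idomt : V → V) (hids : IsIdomS E s idoms) (hidt : IsIdomT E t idomt)
    (p : List V) (hp : IsMaximalUnivocal idoms idomt s t p)
    (v : V) (hv : v ∉ p) (x : List V) (hx : IsExtension E s t v x) :
    p <:+: x ∨ ∀ a ∈ p, a ∉ x := by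
  obtain ⟨ds, dt, hds, hdt, rfl⟩ := hx
  by_cases h : ∃ a ∈ p, a ∈ ds ++ dt.tail
  · left
    obtain ⟨a, hap, hax⟩ := h
    rcases List.mem_append.mp hax with h1 | h2
    · have hC := lemC hids hall hp.1.2 ds.length ds v le_rfl hds hv ⟨a, hap, h1⟩
      exact hC.trans ⟨[], dt.tail, by simp⟩
    · have hadt : a ∈ dt := List.mem_of_mem_tail h2
      have hC := lemC' hidt hall hp.1.2 dt.length dt v le_rfl hdt hv ⟨a, hap, hadt⟩
      obtain ⟨dt', rfl⟩ : ∃ dt', dt = v :: dt' := by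
        have hhd := hdt.2.2.2.1
        cases dt with
        | nil => simp at hhd
        | cons b dt' => simp at hhd; exact ⟨dt', by rw [hhd]⟩
      rcases List.infix_cons_iff.mp hC with hpre | hinf
      · exfalso
        cases p with
        | nil => exact hp.1.1 rfl
        | cons b p' =>
          obtain ⟨r, hr⟩ := hpre
          have hbv : b = v := by
            have := congrArg List.head? hr
            simpa using this
          exact hv (by simp [hbv])
      · exact hinf.trans ⟨ds, [], by simp⟩
  · right
    intro a hap hax
    exact h ⟨a, hap, hax⟩

end FD
end

section
/- Let G be a directed graph with unique source s and unique sink t in which every vertex lies on an s-t path, and let n = |V|. The number of distinct maximal safe sequences for walk covers of G is at most n, since every maximal safe sequence equals ext(v) for some vertex v and the map v ↦ ext(v) on the relevant vertices yields at most n sequences. -/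
namespace FD

variable {V : Type*}

lemma tail_sublist_of_cons {a : V} {l₁ l₂ : List V} (h : l₁.Sublist (a :: l₂)) :
    l₁.tail.Sublist l₂ := by
  cases h with
  | cons _ h => exact (List.tail_sublist l₁).trans h
  | cons_cons _ h => exact h

lemma walk_reverse {E : V → V → Prop} {u v : V} {w : List V} (h : IsWalkFromTo E u v w) :
    IsWalkFromTo (flip E) v u w.reverse := by
  obtain ⟨⟨hne, hch⟩, hh, hl⟩ := h
  refine ⟨⟨by simpa using hne, List.isChain_reverse.mpr hch⟩, ?_, ?_⟩
  · rw [List.head?_reverse]; exact hl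
  · rw [List.getLast?_reverse]; exact hh

lemma path_reverse {E : V → V → Prop} {u v : V} {w : List V} (h : IsPathFromTo E u v w) :
    IsPathFromTo (flip E) v u w.reverse :=
  ⟨walk_reverse h.1, by simpa using h.2⟩

lemma tdom_flip {E : V → V → Prop} {t u v : V} : TDom E t u v ↔ SDom (flip E) t u v := by
  constructor
  · intro h p hp
    have := h p.reverse (by simpa using path_reverse hp)
    simpa using this
  · intro h q hq
    have := h q.reverse (path_reverse hq)
    simpa using this

theorem exists_path_of_walk {E : V → V → Prop} {s v : V} (w : List V)
    (hw : IsWalkFromTo E s v w) : ∃ p, IsPathFromTo E s v p ∧ ∀ x ∈ p, x ∈ w := by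
  by_cases hnd : w.Nodup
  · exact ⟨w, ⟨hw, hnd⟩, fun x hx => hx⟩
  · obtain ⟨x, hdup⟩ := List.exists_duplicate_iff_not_nodup.mpr hnd
    have hsub : ([x] ++ [x]).Sublist w := List.duplicate_iff_sublist.mp hdup
    rw [List.append_sublist_iff] at hsub
    obtain ⟨r1, r2, hw12, h1, h2⟩ := hsub
    obtain ⟨a1, a2, h1e⟩ := List.append_of_mem (List.singleton_sublist.mp h1)
    obtain ⟨b1, b2, h2e⟩ := List.append_of_mem (List.singleton_sublist.mp h2)
    have hwe : w = (a1 ++ [x]) ++ ((a2 ++ b1) ++ (x :: b2)) := by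
      rw [hw12, h1e, h2e]; simp
    obtain ⟨⟨hne, hch⟩, hh, hl⟩ := hw
    set w' : List V := (a1 ++ [x]) ++ b2 with hw'def
    have hxb2 : List.Chain' E (x :: b2) := by
      have : List.Chain' E ((a1 ++ [x] ++ (a2 ++ b1)) ++ (x :: b2)) := by
        rw [hwe] at hch; simpa [List.append_assoc] using hch
      exact (List.isChain_append.mp this).2.1
    have hwalk' : IsWalkFromTo E s v w' := by
      refine ⟨⟨by simp [hw'def], ?_⟩, ?_, ?_⟩
      · rw [hw'def]; apply List.isChain_append.mpr
        refine ⟨(List.isChain_append.mp (hwe ▸ hch)).1, (List.isChain_cons.mp hxb2).2, ?_⟩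
        intro y hy z hz
        rw [List.getLast?_concat] at hy
        cases hy
        exact (List.isChain_cons.mp hxb2).1 z hz
      · rw [hw'def, List.head?_append_of_ne_nil _ (by simp)]
        rw [hwe, List.head?_append_of_ne_nil _ (by simp)] at hh
        exact hh
      · rw [hwe, List.getLast?_append_of_ne_nil _ (by simp)] at hl
        cases b2 with
        | nil => simpa [hw'def] using hl
        | cons c cs =>
          rw [hw'def, List.getLast?_append_of_ne_nil _ (by simp)]
          simpa using hl
    have hlen : w'.length < w.length := by
      rw [hwe, hw'def]; simp; omega
    obtain ⟨p, hp, hmem⟩ := exists_path_of_walk w' hwalk'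
    refine ⟨p, hp, fun y hy => ?_⟩
    have := hmem y hy
    rw [hw'def] at this
    rw [hwe]
    simp only [List.mem_append, List.mem_cons] at this ⊢
    tauto
termination_by w.length

theorem sdom_mem_walk {E : V → V → Prop} {s u v : V} {w : List V}
    (h : SDom E s u v) (hw : IsWalkFromTo E s v w) : u ∈ w := by
  obtain ⟨p, hp, hmem⟩ := exists_path_of_walk w hw
  exact hmem u (h p hp)

theorem chain_sublist_walk {E : V → V → Prop} {s : V} (c : List V) :
    ∀ {v : V} {w : List V}, c.Chain' (fun a b => SDom E s a b) → c.Nodup →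
      c.getLast? = some v → IsWalkFromTo E s v w → c.Sublist w := by
  induction c using List.reverseRecOn with
  | nil => intro v w _ _ h; simp at h
  | append_singleton c' v' ih =>
    intro v w hch hnd hlast hw
    have hv : v' = v := by rwa [List.getLast?_concat, Option.some_inj] at hlast
    subst hv
    have hvmem : v' ∈ w := List.mem_of_getLast? hw.2.2
    rcases eq_or_ne c' [] with hc | hc
    · subst hc; simpa using List.singleton_sublist.mpr hvmem
    · have hd : c'.getLast? = some (c'.getLast hc) := List.getLast?_eq_getLast hc
      set d := c'.getLast hc with hddef
      have hdv : SDom E s d v' := by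
        have := (List.isChain_append.mp hch).2.2
        exact this d hd v' (by simp)
      obtain ⟨w1, w2, hwe⟩ := List.append_of_mem hvmem
      have hwe' : w = (w1 ++ [v']) ++ w2 := by rw [hwe]; simp
      have hw1 : IsWalkFromTo E s v' (w1 ++ [v']) := by
        refine ⟨⟨by simp, (List.isChain_append.mp (hwe' ▸ hw.1.2)).1⟩, ?_, List.getLast?_concat⟩
        · rw [← List.head?_append_of_ne_nil (w1 ++ [v']) (l₂ := w2) (by simp), ← hwe']
          exact hw.2.1
      have hdw : d ∈ w1 ++ [v'] := sdom_mem_walk hdv hw1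
      obtain ⟨u1, u2, hue⟩ := List.append_of_mem hdw
      have hue' : w1 ++ [v'] = (u1 ++ [d]) ++ u2 := by rw [hue]; simp
      have hu : IsWalkFromTo E s d (u1 ++ [d]) := by
        refine ⟨⟨by simp, (List.isChain_append.mp (hue' ▸ hw1.1.2)).1⟩, ?_, List.getLast?_concat⟩
        · rw [← List.head?_append_of_ne_nil (u1 ++ [d]) (l₂ := u2) (by simp), ← hue']
          exact hw1.2.1
      have hndc : c'.Nodup ∧ v' ∉ c' := by
        rw [List.nodup_append] at hnd
        exact ⟨hnd.1, fun hvc => hnd.2.2 _ hvc _ (by simp) rfl⟩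
      have hdvne : d ≠ v' := fun h => hndc.2 (h ▸ List.getLast_mem hc)
      have hu2ne : u2 ≠ [] := by
        intro h
        rw [h, List.append_nil] at hue'
        have h2 := List.getLast?_concat (l := w1) (a := v')
        rw [hue', List.getLast?_concat] at h2
        exact hdvne (by injection h2)
      have hvu2 : v' ∈ u2 := by
        have h1 : (w1 ++ [v']).getLast? = some v' := List.getLast?_concat
        rw [hue', List.getLast?_append_of_ne_nil _ hu2ne] at h1
        exact List.mem_of_getLast? h1
      have hc'sub : c'.Sublist (u1 ++ [d]) :=
        ih (List.isChain_append.mp hch).1 hndc.1 hd hu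
      have hfin : (c' ++ [v']).Sublist ((u1 ++ [d]) ++ u2) :=
        List.Sublist.append hc'sub (List.singleton_sublist.mpr hvu2)
      rw [← hue'] at hfin
      exact hfin.trans (hwe' ▸ List.sublist_append_left _ _)


----------------------------------------------------------------

lemma sdom_self {E : V → V → Prop} {s a : V} : SDom E s a a :=
  fun q hq => List.mem_of_getLast? hq.1.2.2

section
open Classical

noncomputable def domChain (E : V → V → Prop) (s a : V) (p : List V) : List V :=
  p.filter fun u => decide (SDom E s u a)

lemma mem_domChain_dom {E : V → V → Prop} {s a : V} {p : List V} {u : V}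
    (h : u ∈ domChain E s a p) : SDom E s u a := by
  have h2 := List.of_mem_filter (p := fun u => decide (SDom E s u a)) h
  exact of_decide_eq_true h2

lemma domChain_sublist {E : V → V → Prop} {s a : V} {p : List V} :
    (domChain E s a p).Sublist p := List.filter_sublist

lemma domChain_nodup {E : V → V → Prop} {s a : V} {p : List V}
    (hp : IsPathFromTo E s a p) : (domChain E s a p).Nodup :=
  domChain_sublist.nodup hp.2

lemma domChain_getLast {E : V → V → Prop} {s a : V} {p : List V}
    (hp : IsPathFromTo E s a p) : (domChain E s a p).getLast? = some a := by
  have hne : p ≠ [] := hp.1.1.1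
  have hgl : p.getLast hne = a := by
    have h2 := List.getLast?_eq_getLast hne
    rw [hp.1.2.2] at h2; exact (Option.some_inj.mp h2).symm
  have hpe : p.dropLast ++ [a] = p := by
    have h := List.dropLast_append_getLast hne
    rwa [hgl] at h
  rw [domChain, ← hpe, List.filter_append]
  have : List.filter (fun u => decide (SDom E s u a)) [a] = [a] := by
    simp [List.filter, decide_eq_true (sdom_self (E := E) (s := s) (a := a))]
  rw [this, List.getLast?_concat]

lemma sublist_domChain {E : V → V → Prop} {s a : V} {p A : List V}
    (hsub : A.Sublist p) (hd : ∀ x ∈ A, SDom E s x a) : A.Sublist (domChain E s a p) := by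
  have h : A.filter (fun u => decide (SDom E s u a)) = A :=
    List.filter_eq_self.mpr (fun x hx => decide_eq_true (hd x hx))
  rw [domChain, ← h]
  exact List.Sublist.filter _ hsub

lemma sdom_of_before {E : V → V → Prop} {s a : V} {p : List V} (hp : IsPathFromTo E s a p)
    {d e : V} (hde : ([d] ++ [e]).Sublist p) (hda : SDom E s d a) : SDom E s d e := by
  intro q hq
  by_contra hdq
  rw [List.append_sublist_iff] at hde
  obtain ⟨r1, r2, hpe, h1, h2⟩ := hde
  obtain ⟨r21, r22, h2e⟩ := List.append_of_mem (List.singleton_sublist.mp h2)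
  have hd1 : d ∈ r1 := List.singleton_sublist.mp h1
  have hpe2 : p = (r1 ++ r21 ++ [e]) ++ r22 := by rw [hpe, h2e]; simp
  rcases eq_or_ne r22 [] with h22 | h22
  · have hea : e = a := by
      have hl := hp.1.2.2
      rw [hpe2, h22, List.append_nil, List.getLast?_concat] at hl
      exact Option.some_inj.mp hl
    exact hdq (hda q (hea ▸ hq))
  · have hch := hp.1.1.2
    have hbound : ∀ y ∈ r22.head?, E e y := by
      intro y hy
      exact (List.isChain_append.mp (hpe2 ▸ hch)).2.2 e (by rw [List.getLast?_concat]; rfl) y hy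
    have hqwalk : IsWalkFromTo E s a (q ++ r22) := by
      refine ⟨⟨by simp [hq.1.1.1], ?_⟩, ?_, ?_⟩
      · apply List.isChain_append.mpr
        refine ⟨hq.1.1.2, (List.isChain_append.mp (hpe2 ▸ hch)).2.1, ?_⟩
        intro x hx y hy
        rw [hq.1.2.2] at hx
        cases hx
        exact hbound y hy
      · rw [List.head?_append_of_ne_nil q hq.1.1.1]
        exact hq.1.2.1
      · rw [List.getLast?_append_of_ne_nil q h22]
        have hl := hp.1.2.2
        rwa [hpe2, List.getLast?_append_of_ne_nil _ h22] at hl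
    have hdmem : d ∈ q ++ r22 := sdom_mem_walk hda hqwalk
    have hdr22 : d ∉ r22 := by
      have hnd := hp.2
      rw [hpe, List.nodup_append] at hnd
      intro hmem
      exact hnd.2.2 _ hd1 _ (by rw [h2e]; exact List.mem_append_right _ (List.mem_cons_of_mem _ hmem)) rfl
    rcases List.mem_append.mp hdmem with h | h
    · exact hdq h
    · exact hdr22 h

lemma domChain_chain' {E : V → V → Prop} {s a : V} {p : List V}
    (hp : IsPathFromTo E s a p) :
    (domChain E s a p).Chain' (fun u w => SDom E s u w) := by
  have hpair : p.Pairwise (fun d e => SDom E s d a → SDom E s d e) :=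
    List.pairwise_iff_forall_sublist.mpr (fun {d e} hde => sdom_of_before hp hde)
  have h2 := hpair.sublist (domChain_sublist (E := E) (s := s) (a := a))
  refine List.Pairwise.isChain (h2.imp_of_mem ?_)
  intro d e hd _ hde
  exact hde (mem_domChain_dom hd)


lemma walk_glue {E : V → V → Prop} {s t a : V} {p q : List V}
    (hp : IsPathFromTo E s a p) (hq : IsPathFromTo E a t q) :
    IsWalkFromTo E s t (p ++ q.tail) := by
  obtain ⟨⟨⟨hpne, hpch⟩, hph, hpl⟩, _⟩ := hp
  obtain ⟨⟨⟨hqne, hqch⟩, hqh, hql⟩, _⟩ := hq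
  cases q with
  | nil => exact absurd rfl hqne
  | cons b q' =>
    have hb : b = a := by simpa using hqh
    subst hb
    cases q' with
    | nil =>
      have hbt : b = t := by simpa using hql
      subst hbt
      exact ⟨⟨by simpa using hpne, by simpa using hpch⟩, by simpa using hph, by simpa using hpl⟩
    | cons c q'' =>
      show IsWalkFromTo E s t (p ++ c :: q'')
      refine ⟨⟨by simp, ?_⟩, ?_, ?_⟩
      · apply List.isChain_append.mpr
        refine ⟨hpch, (List.isChain_cons.mp hqch).2, ?_⟩
        intro x hx y hy
        rw [hpl] at hx
        cases hx
        exact (List.isChain_cons.mp hqch).1 y hy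
      · rw [List.head?_append_of_ne_nil p hpne]; exact hph
      · rw [List.getLast?_append_of_ne_nil p (l₂ := (c :: q'')) (by simp)]
        rw [List.getLast?_cons_cons] at hql
        exact hql

lemma path_split {E : V → V → Prop} {s t a : V} {r : List V}
    (hr : IsPathFromTo E s t r) (ha : a ∈ r) :
    (∃ p, IsPathFromTo E s a p) ∧ (∃ q, IsPathFromTo E a t q) := by
  obtain ⟨r1, r2, hre⟩ := List.append_of_mem ha
  obtain ⟨⟨⟨hne, hch⟩, hh, hl⟩, hnd⟩ := hr
  have hre' : r = (r1 ++ [a]) ++ r2 := by rw [hre]; simp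
  constructor
  · refine ⟨r1 ++ [a], ⟨⟨by simp, (List.isChain_append.mp (hre' ▸ hch)).1⟩, ?_,
      List.getLast?_concat⟩, ?_⟩
    · rw [← List.head?_append_of_ne_nil (r1 ++ [a]) (l₂ := r2) (by simp), ← hre']; exact hh
    · exact (List.sublist_append_left _ _).nodup (hre' ▸ hnd)
  · refine ⟨a :: r2, ⟨⟨by simp, (List.isChain_append.mp (hre ▸ hch)).2.1⟩, rfl, ?_⟩, ?_⟩
    · rw [← List.getLast?_append_of_ne_nil r1 (l₂ := a :: r2) (by simp), ← hre]; exact hl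
    · exact (List.sublist_append_right _ _).nodup (hre ▸ hnd)

lemma ext_safe (E : V → V → Prop) (s t a : V) {p q : List V}
    (hp : IsPathFromTo E s a p) (hq : IsPathFromTo E a t q) :
    SafeSeq E s t Set.univ
      (domChain E s a p ++ ((domChain (flip E) t a q.reverse).reverse).tail) := by
  intro P hP
  obtain ⟨w, hwP, haw⟩ := hP.2 a (Set.mem_univ a)
  refine ⟨w, hwP, ?_⟩
  have hw := hP.1 w hwP
  obtain ⟨w1, w2, hwe⟩ := List.append_of_mem haw
  have hwe' : w = (w1 ++ [a]) ++ w2 := by rw [hwe]; simp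
  have hw1 : IsWalkFromTo E s a (w1 ++ [a]) := by
    refine ⟨⟨by simp, (List.isChain_append.mp (hwe' ▸ hw.1.2)).1⟩, ?_, List.getLast?_concat⟩
    rw [← List.head?_append_of_ne_nil (w1 ++ [a]) (l₂ := w2) (by simp), ← hwe']
    exact hw.2.1
  have hqrev : IsPathFromTo (flip E) t a q.reverse := path_reverse hq
  have hS : (domChain E s a p).Sublist (w1 ++ [a]) :=
    chain_sublist_walk _ (domChain_chain' hp) (domChain_nodup hp) (domChain_getLast hp) hw1
  have hw2 : IsWalkFromTo E a t (a :: w2) := by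
    refine ⟨⟨by simp, (List.isChain_append.mp (hwe ▸ hw.1.2)).2.1⟩, rfl, ?_⟩
    rw [← List.getLast?_append_of_ne_nil w1 (l₂ := a :: w2) (by simp), ← hwe]
    exact hw.2.2
  have hw2' : IsWalkFromTo (flip E) t a ((a :: w2).reverse) := walk_reverse hw2
  have hT' : (domChain (flip E) t a q.reverse).Sublist ((a :: w2).reverse) :=
    chain_sublist_walk _ (domChain_chain' hqrev) (domChain_nodup hqrev)
      (domChain_getLast hqrev) hw2'
  have hT : ((domChain (flip E) t a q.reverse).reverse).Sublist (a :: w2) := by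
    simpa using hT'.reverse
  have hTt := tail_sublist_of_cons hT
  have hfin := List.Sublist.append hS hTt
  rw [← hwe'] at hfin
  exact hfin


lemma safe_sub_ext (E : V → V → Prop) (s t : V)
    (hall : ∀ a : V, ∃ r, IsPathFromTo E s t r ∧ a ∈ r)
    (ps qt : V → List V) (hps : ∀ a, IsPathFromTo E s a (ps a))
    (hqt : ∀ a, IsPathFromTo E a t (qt a))
    {X : List V} (hX : SafeSeq E s t Set.univ X) :
    ∃ a, X.Sublist
      (domChain E s a (ps a) ++ ((domChain (flip E) t a ((qt a).reverse)).reverse).tail) := by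
  classical
  have hXnd : X.Nodup := by
    obtain ⟨w, hwP, hsub⟩ := hX {r | IsPathFromTo E s t r}
      ⟨fun w hw => hw.1, fun c _ => (hall c).imp (fun r hr => ⟨hr.1, hr.2⟩)⟩
    exact hsub.nodup hwP.2
  set k := X.length with hk
  set L : List V → ℕ := fun p => Nat.findGreatest (fun i => (X.take i).Sublist p) k with hL
  set M : List V → ℕ := fun q => Nat.findGreatest (fun j => (X.drop (k - j)).Sublist q) k with hM
  have hLspec : ∀ p, (X.take (L p)).Sublist p := by
    intro p
    rw [hL]
    exact Nat.findGreatest_spec (P := fun i => (X.take i).Sublist p) (Nat.zero_le k)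
      (show (X.take 0).Sublist p by simp)
  have hMspec : ∀ q, (X.drop (k - M q)).Sublist q := by
    intro q
    rw [hM]
    exact Nat.findGreatest_spec (P := fun j => (X.drop (k - j)).Sublist q) (Nat.zero_le k)
      (show (X.drop (k - 0)).Sublist q by
        rw [Nat.sub_zero, hk, List.drop_length]; exact List.nil_sublist q)
  have hminS : ∀ a : V, ∃ p, IsPathFromTo E s a p ∧
      ∀ p', IsPathFromTo E s a p' → L p ≤ L p' := by
    intro a
    obtain ⟨r, hr, har⟩ := hall a
    obtain ⟨p0, hp0⟩ := (path_split hr har).1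
    have hne : (Set.range fun p : {p : List V // IsPathFromTo E s a p} => L p.1).Nonempty :=
      ⟨L p0, ⟨⟨p0, hp0⟩, rfl⟩⟩
    obtain ⟨⟨p, hp⟩, hpeq⟩ := Nat.sInf_mem hne
    refine ⟨p, hp, fun p' hp' => ?_⟩
    have h9 : L p = sInf (Set.range fun p : {p : List V // IsPathFromTo E s a p} => L p.1) :=
      hpeq
    rw [h9]
    exact Nat.sInf_le ⟨⟨p', hp'⟩, rfl⟩
  have hminT : ∀ a : V, ∃ q, IsPathFromTo E a t q ∧
      ∀ q', IsPathFromTo E a t q' → M q ≤ M q' := by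
    intro a
    obtain ⟨r, hr, har⟩ := hall a
    obtain ⟨q0, hq0⟩ := (path_split hr har).2
    have hne : (Set.range fun q : {q : List V // IsPathFromTo E a t q} => M q.1).Nonempty :=
      ⟨M q0, ⟨⟨q0, hq0⟩, rfl⟩⟩
    obtain ⟨⟨q, hq⟩, hqeq⟩ := Nat.sInf_mem hne
    refine ⟨q, hq, fun q' hq' => ?_⟩
    have h9 : M q = sInf (Set.range fun q : {q : List V // IsPathFromTo E a t q} => M q.1) :=
      hqeq
    rw [h9]
    exact Nat.sInf_le ⟨⟨q', hq'⟩, rfl⟩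
  choose pa hpa hpamin using hminS
  choose qa hqa hqamin using hminT
  obtain ⟨w, hwmem, hsubw⟩ := hX (Set.range fun a => pa a ++ (qa a).tail)
    ⟨by rintro w ⟨a, rfl⟩; exact walk_glue (hpa a) (hqa a),
     fun c _ => ⟨pa c ++ (qa c).tail, ⟨c, rfl⟩,
       List.mem_append_left _ (List.mem_of_getLast? (hpa c).1.2.2)⟩⟩
  obtain ⟨a, rfl⟩ := hwmem
  rw [List.sublist_append_iff] at hsubw
  obtain ⟨A, B, hXe, hA0, hB0⟩ := hsubw
  have hB0' : B.Sublist (qa a) := hB0.trans (List.tail_sublist _)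
  have hkAB : A.length + B.length = k := by rw [hk, hXe, List.length_append]
  have hAtake : X.take A.length = A := by rw [hXe, List.take_left]
  have hBdrop : X.drop A.length = B := by rw [hXe, List.drop_left]
  have hA : ∀ p, IsPathFromTo E s a p → A.Sublist p := by
    intro p hp
    have h1 : A.length ≤ L (pa a) := by
      rw [hL]
      exact Nat.le_findGreatest (P := fun i => (X.take i).Sublist (pa a)) (by omega)
        (show (X.take A.length).Sublist (pa a) by rw [hAtake]; exact hA0)
    have h2 : A.length ≤ L p := h1.trans (hpamin a p hp)
    have h3 : X.take A.length = (X.take (L p)).take A.length := by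
      rw [List.take_take, min_eq_left h2]
    have h4 : A.Sublist (X.take (L p)) := by
      rw [← hAtake, h3]; exact List.take_sublist _ _
    exact h4.trans (hLspec p)
  have hB : ∀ q, IsPathFromTo E a t q → B.Sublist q := by
    intro q hq
    have hkj : k - B.length = A.length := by omega
    have h1 : B.length ≤ M (qa a) := by
      rw [hM]
      exact Nat.le_findGreatest (P := fun j => (X.drop (k - j)).Sublist (qa a)) (by omega)
        (show (X.drop (k - B.length)).Sublist (qa a) by rw [hkj, hBdrop]; exact hB0')
    have h2 : B.length ≤ M q := h1.trans (hqamin a q hq)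
    have h3 : X.drop (k - B.length) = (X.drop (k - M q)).drop ((k - B.length) - (k - M q)) := by
      rw [List.drop_drop]; congr 1; omega
    have h4 : B.Sublist (X.drop (k - M q)) := by
      rw [← hBdrop, ← hkj, h3]; exact List.drop_sublist _ _
    exact h4.trans (hMspec q)
  have hAdom : ∀ x ∈ A, SDom E s x a := fun x hx p hp => (hA p hp).subset hx
  have hBdom : ∀ x ∈ B, SDom (flip E) t x a := by
    intro x hx
    rw [← tdom_flip]
    intro q hq
    exact (hB q hq).subset hx
  refine ⟨a, ?_⟩
  set cS := domChain E s a (ps a) with hcS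
  set cT' := domChain (flip E) t a ((qt a).reverse) with hcT'
  have hqrev : IsPathFromTo (flip E) t a ((qt a).reverse) := path_reverse (hqt a)
  have hAc : A.Sublist cS := sublist_domChain (hA (ps a) (hps a)) hAdom
  have hBc' : B.reverse.Sublist cT' :=
    sublist_domChain (List.reverse_sublist.mpr (hB (qt a) (hqt a)))
      (fun x hx => hBdom x (List.mem_reverse.mp hx))
  set cT := cT'.reverse with hcT
  have hBc : B.Sublist cT := by simpa [hcT] using hBc'.reverse
  have hTlast : cT'.getLast? = some a := domChain_getLast hqrev
  have hThead : cT.head? = some a := by rw [hcT, List.head?_reverse]; exact hTlast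
  have hcTtail : cT = a :: cT.tail := by
    cases hcTc : cT with
    | nil => rw [hcTc] at hThead; exact absurd hThead (by simp)
    | cons b l =>
      rw [hcTc] at hThead
      obtain rfl : b = a := by simpa using hThead
      rfl
  rw [hXe]
  rcases hBe : B with _ | ⟨b, B'⟩
  · rw [List.append_nil]
    exact hAc.trans (List.sublist_append_left _ _)
  · rw [hBe] at hBc
    have hBtail : B'.Sublist cT.tail := by
      have h5 := tail_sublist_of_cons (hcTtail ▸ hBc)
      simpa using h5
    by_cases hba : b = a
    · subst hba
      have hnotA : b ∉ A := by
        have hnd2 := hXnd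
        rw [hXe, hBe, List.nodup_append] at hnd2
        exact fun hmem => hnd2.2.2 _ hmem _ (by simp) rfl
      have hcSlast : cS.getLast? = some b := domChain_getLast (hps b)
      have hcSne : cS ≠ [] := fun h => by simp [h] at hcSlast
      have hgl : cS.getLast hcSne = b := by
        have h2 := List.getLast?_eq_getLast hcSne
        rw [hcSlast] at h2
        exact (Option.some_inj.mp h2).symm
      have hcSeq : cS.dropLast ++ [b] = cS := by
        have h := List.dropLast_append_getLast hcSne
        rwa [hgl] at h
      have hAc2 : A.Sublist (cS.dropLast ++ [b]) := by rw [hcSeq]; exact hAc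
      rw [List.sublist_append_iff] at hAc2
      obtain ⟨A1, A2, hAe, hA1, hA2⟩ := hAc2
      have hA2nil : A2 = [] := by
        cases hA2e : A2 with
        | nil => rfl
        | cons x xs =>
          rw [hA2e] at hA2
          have hxa : x = b := by simpa using hA2.subset (by simp : x ∈ x :: xs)
          exfalso
          apply hnotA
          rw [hAe, hA2e, hxa]
          simp
      have h5 : (A ++ [b]).Sublist (cS.dropLast ++ [b]) :=
        List.Sublist.append (by rw [hAe, hA2nil, List.append_nil]; exact hA1)
          (List.Sublist.refl _)
      have h6 : (A ++ [b]).Sublist cS := by rw [← hcSeq]; exact h5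
      have h7 := List.Sublist.append h6 hBtail
      simpa using h7
    · have hBT : (b :: B').Sublist cT.tail := by
        rw [hcTtail] at hBc
        cases hBc with
        | cons _ h => exact h
        | cons_cons _ h => exact absurd rfl hba
      exact List.Sublist.append hAc hBT


end



/-- there are at most `n = |V|` distinct maximal safe sequences for walk
covers of `G`. -/
theorem stmt18 {V : Type*} [Fintype V] (E : V → V → Prop) (s t : V)
    (hs : UniqueSource E s) (ht : UniqueSink E t)
    (hall : ∀ a : V, ∃ p, IsPathFromTo E s t p ∧ a ∈ p) :
    {X : List V | MaximalSafe E s t X}.Finite ∧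
      {X : List V | MaximalSafe E s t X}.ncard ≤ Fintype.card V := by
  classical
  have hSP : ∀ a : V, ∃ p, IsPathFromTo E s a p := fun a => by
    obtain ⟨r, hr, har⟩ := hall a; exact (path_split hr har).1
  have hTP : ∀ a : V, ∃ q, IsPathFromTo E a t q := fun a => by
    obtain ⟨r, hr, har⟩ := hall a; exact (path_split hr har).2
  choose ps hps using hSP
  choose qt hqt using hTP
  set extF : V → List V := fun a =>
    domChain E s a (ps a) ++ ((domChain (flip E) t a ((qt a).reverse)).reverse).tail
    with hextF
  have key : ∀ X, MaximalSafe E s t X → ∃ a, X = extF a := by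
    intro X hX
    obtain ⟨hsafe, hmax⟩ := hX
    obtain ⟨a, hsub⟩ := safe_sub_ext E s t hall ps qt hps hqt hsafe
    refine ⟨a, ?_⟩
    by_contra hne
    exact hmax (extF a) hsub (fun h => hne h.symm) (ext_safe E s t a (hps a) (hqt a))
  have hsubset : {X : List V | MaximalSafe E s t X} ⊆ extF '' Set.univ := by
    intro X hX
    obtain ⟨a, ha⟩ := key X hX
    exact ⟨a, trivial, ha.symm⟩
  have hfin : (extF '' Set.univ).Finite := Set.finite_univ.image extF
  refine ⟨hfin.subset hsubset, ?_⟩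
  calc {X : List V | MaximalSafe E s t X}.ncard ≤ (extF '' Set.univ).ncard :=
        Set.ncard_le_ncard hsubset hfin
    _ ≤ (Set.univ : Set V).ncard := Set.ncard_image_le Set.finite_univ
    _ = Fintype.card V := by rw [Set.ncard_univ, Nat.card_eq_fintype_card]


end FD
end
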